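/- Let A, N be positive integers, σ : ℝ → ℝ any function, and W, C be N×N real matrices. Define W̃[c,d,i,a,b,j] = [d = a]·C[i,j] + [d = b]·[c = a]·W[i,j]. Then the VSML update map F(s)[a,b,j] = σ(∑_i s[a,b,i]·W[i,j] + ∑_{c,i} s[c,a,i]·C[i,j]) coincides with the single-RNN update map G(s)[a,b,j] = σ(∑_{c,d,i} s[c,d,i]·W̃[c,d,i,a,b,j]) as functions on (Fin A × Fin A × Fin N → ℝ). -/
import Mathlib


theorem stmt4 (A N : ℕ) (hA : 0 < A) (hN : 0 < N)
    (σ : ℝ → ℝ) (W C : Fin N → Fin N → ℝ)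
    (Wt : Fin A → Fin A → Fin N → Fin A → Fin A → Fin N → ℝ)
    (hWt : ∀ c d i a b j, Wt c d i a b j =
      (if d = a then C i j else 0) +
      (if d = b then (1:ℝ) else 0) * (if c = a then W i j else 0))
    (F G : (Fin A → Fin A → Fin N → ℝ) → (Fin A → Fin A → Fin N → ℝ))
    (hF : ∀ s a b j, F s a b j =
      σ ((∑ i, s a b i * W i j) + ∑ c, ∑ i, s c a i * C i j))
    (hG : ∀ s a b j, G s a b j =
      σ (∑ c, ∑ d, ∑ i, s c d i * Wt c d i a b j)) :
    F = G := by
  funext s a b j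
  rw [hF, hG]
  congr 1
  have key : ∀ c d, (∑ i, s c d i * Wt c d i a b j) =
      (if d = a then ∑ i, s c d i * C i j else 0) +
      ((if c = a then (1:ℝ) else 0) * (if d = b then ∑ i, s c d i * W i j else 0)) := by
    intro c d
    by_cases h1 : d = a <;> by_cases h2 : d = b <;> by_cases h3 : c = a <;>
      simp [hWt, h1, h2, h3, Finset.sum_add_distrib, mul_add]
  simp only [key, Finset.sum_add_distrib, Finset.sum_ite_eq', Finset.mem_univ, if_true,
    ← Finset.mul_sum, ← Finset.sum_mul]
  rw [add_comm]
  congr 1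
  simp [Finset.sum_ite_eq']
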